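/- Let V' be a maximal chain of a finite digraph G with respect to the reachability preorder. Then the subdigraph induced by V' has a unique sink and a unique source; moreover every vertex of this sink is an upper bound of V' and every vertex of this source is a lower bound of V'. -/

import Mathlib

variable {V A : Type*}

/-- Reachability by a directed path (`u ⇝ v`). -/
def Reaches (tail head : A → V) : V → V → Prop :=
  Relation.ReflTransGen (fun u v => ∃ a, tail a = u ∧ head a = v)

/-- A chain for the reachability preorder. -/
def IsChainD (tail head : A → V) (C : Set V) : Prop :=
  ∀ u ∈ C, ∀ v ∈ C, Reaches tail head u v ∨ Reaches tail head v u

/-- A maximal chain. -/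
def IsMaximalChainD (tail head : A → V) (C : Set V) : Prop :=
  IsChainD tail head C ∧ ∀ C', IsChainD tail head C' → C ⊆ C' → C = C'

/-- One step inside the induced subdigraph on `W`. -/
def StepIn (tail head : A → V) (W : Set V) (u v : V) : Prop :=
  ∃ a, tail a = u ∧ head a = v ∧ u ∈ W ∧ v ∈ W

/-- Reachability inside the induced subdigraph on `W`. -/
def ReachesIn (tail head : A → V) (W : Set V) : V → V → Prop :=
  Relation.ReflTransGen (StepIn tail head W)

/-- Strongly connected component of the induced subdigraph on `W`. -/
def IsSCCIn (tail head : A → V) (W : Set V) (C : Set V) : Prop :=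
  C ⊆ W ∧ C.Nonempty ∧ (∀ u ∈ C, ∀ v ∈ C, ReachesIn tail head W u v) ∧
    ∀ u ∈ C, ∀ v ∈ W, ReachesIn tail head W u v → ReachesIn tail head W v u → v ∈ C

/-- A source of the induced subdigraph on `W`: an SCC with no arcs entering it from its
complement in `W`. -/
def IsSourceIn (tail head : A → V) (W : Set V) (F : Set V) : Prop :=
  IsSCCIn tail head W F ∧ ∀ a, tail a ∈ W → head a ∈ F → tail a ∈ F

/-- A sink of the induced subdigraph on `W`: an SCC with no arcs leaving it into its
complement in `W`. -/
def IsSinkIn (tail head : A → V) (W : Set V) (S : Set V) : Prop :=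
  IsSCCIn tail head W S ∧ ∀ a, head a ∈ W → tail a ∈ S → head a ∈ S

/- ### Auxiliary lemmas -/

lemma reaches_swap {tail head : A → V} {u v : V} (h : Reaches tail head u v) :
    Reaches head tail v u := by
  induction h with
  | refl => exact Relation.ReflTransGen.refl
  | tail _ step ih =>
    obtain ⟨a, ha1, ha2⟩ := step
    exact Relation.ReflTransGen.head ⟨a, ha2, ha1⟩ ih

lemma reaches_swap_iff {tail head : A → V} {u v : V} :
    Reaches head tail u v ↔ Reaches tail head v u :=
  ⟨reaches_swap, reaches_swap⟩

lemma reachesIn_swap {tail head : A → V} {W : Set V} {u v : V}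
    (h : ReachesIn tail head W u v) : ReachesIn head tail W v u := by
  induction h with
  | refl => exact Relation.ReflTransGen.refl
  | tail _ step ih =>
    obtain ⟨a, ha1, ha2, hu, hv⟩ := step
    exact Relation.ReflTransGen.head ⟨a, ha2, ha1, hv, hu⟩ ih

lemma reachesIn_swap_iff {tail head : A → V} {W : Set V} {u v : V} :
    ReachesIn head tail W u v ↔ ReachesIn tail head W v u :=
  ⟨reachesIn_swap, reachesIn_swap⟩

lemma isChainD_swap {tail head : A → V} {C : Set V} (h : IsChainD tail head C) :
    IsChainD head tail C := fun u hu v hv =>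
  ((h u hu v hv).symm.imp reaches_swap reaches_swap)

lemma isMaximalChainD_swap {tail head : A → V} {C : Set V}
    (h : IsMaximalChainD tail head C) : IsMaximalChainD head tail C :=
  ⟨isChainD_swap h.1, fun C' hC' hsub => h.2 C' (isChainD_swap hC') hsub⟩

lemma isSCCIn_swap {tail head : A → V} {W C : Set V} (h : IsSCCIn tail head W C) :
    IsSCCIn head tail W C := by
  obtain ⟨h1, h2, h3, h4⟩ := h
  exact ⟨h1, h2, fun u hu v hv => reachesIn_swap (h3 v hv u hu),
    fun u hu v hv hr1 hr2 => h4 u hu v hv (reachesIn_swap hr2) (reachesIn_swap hr1)⟩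

lemma isSourceIn_swap {tail head : A → V} {W F : Set V} :
    IsSourceIn tail head W F ↔ IsSinkIn head tail W F := by
  constructor
  · rintro ⟨h1, h2⟩
    exact ⟨isSCCIn_swap h1, h2⟩
  · rintro ⟨h1, h2⟩
    exact ⟨isSCCIn_swap h1, h2⟩

lemma reachesIn_reaches {tail head : A → V} {W : Set V} {u v : V}
    (h : ReachesIn tail head W u v) : Reaches tail head u v := by
  induction h with
  | refl => exact Relation.ReflTransGen.refl
  | tail _ st ih =>
    obtain ⟨a, h1, h2, _, _⟩ := st
    exact ih.tail ⟨a, h1, h2⟩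

/-- Decomposition: a global path between two vertices of `W` either stays in `W`
or passes through a vertex outside `W`. -/
lemma reaches_decomp (tail head : A → V) (W : Set V) {u v : V}
    (h : Reaches tail head u v) (hu : u ∈ W) (hv : v ∈ W) :
    ReachesIn tail head W u v ∨
      ∃ w, w ∉ W ∧ Reaches tail head u w ∧ Reaches tail head w v := by
  revert hv
  induction h with
  | refl => exact fun _ => Or.inl Relation.ReflTransGen.refl
  | @tail b c hub step ih =>
    intro hc
    obtain ⟨a, ha1, ha2⟩ := step
    by_cases hb : b ∈ W
    · rcases ih hb with h1 | ⟨w, hw, hw1, hw2⟩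
      · exact Or.inl (h1.tail ⟨a, ha1, ha2, hb, hc⟩)
      · exact Or.inr ⟨w, hw, hw1, hw2.tail ⟨a, ha1, ha2⟩⟩
    · exact Or.inr ⟨b, hb, hub, Relation.ReflTransGen.single ⟨a, ha1, ha2⟩⟩

/-- Key lemma: between elements of a maximal chain, global reachability implies
reachability inside the induced subdigraph. -/
lemma maximalChain_reachesIn [Fintype V] (tail head : A → V) {V' : Set V}
    (hV' : IsMaximalChainD tail head V') :
    ∀ n : ℕ, ∀ u ∈ V', ∀ v ∈ V', Reaches tail head u v →
      ({c | c ∈ V' ∧ Reaches tail head u c ∧ Reaches tail head c v}.ncard ≤ n) →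
      ReachesIn tail head V' u v := by
  intro n
  induction n using Nat.strong_induction_on with
  | _ n ih =>
    intro u hu v hv huv hcard
    rcases reaches_decomp tail head V' huv hu hv with h | ⟨w, hw, huw, hwv⟩
    · exact h
    · -- get a chain element incomparable with w
      have hc : ∃ c ∈ V', ¬ Reaches tail head c w ∧ ¬ Reaches tail head w c := by
        by_contra hcon
        push_neg at hcon
        have hcomp : ∀ x ∈ V', Reaches tail head x w ∨ Reaches tail head w x := by
          intro x hx
          by_cases hxw : Reaches tail head x w
          · exact Or.inl hxw
          · exact Or.inr (hcon x hx hxw)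
        have hchain : IsChainD tail head (V' ∪ {w}) := by
          rintro x (hx | hx) y (hy | hy)
          · exact hV'.1 x hx y hy
          · have hy' : y = w := hy
            rw [hy']
            exact hcomp x hx
          · have hx' : x = w := hx
            rw [hx']
            exact (hcomp y hy).symm
          · have hx' : x = w := hx
            have hy' : y = w := hy
            rw [hx', hy']
            exact Or.inl Relation.ReflTransGen.refl
        have := hV'.2 (V' ∪ {w}) hchain Set.subset_union_left
        apply hw
        rw [this]
        exact Or.inr rfl
      obtain ⟨c, hcV, hcw, hwc⟩ := hc
      have hncu : ¬ Reaches tail head c u := fun h => hcw (h.trans huw)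
      have hnvc : ¬ Reaches tail head v c := fun h => hwc (hwv.trans h)
      have huc : Reaches tail head u c := by
        rcases hV'.1 u hu c hcV with h | h
        · exact h
        · exact absurd h hncu
      have hcv : Reaches tail head c v := by
        rcases hV'.1 c hcV v hv with h | h
        · exact h
        · exact absurd h hnvc
      -- the two subintervals are strictly smaller
      have hfin : {x | x ∈ V' ∧ Reaches tail head u x ∧ Reaches tail head x v}.Finite :=
        Set.toFinite _
      have hsub1 : {x | x ∈ V' ∧ Reaches tail head u x ∧ Reaches tail head x c} ⊂
          {x | x ∈ V' ∧ Reaches tail head u x ∧ Reaches tail head x v} := by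
        constructor
        · rintro x ⟨hx1, hx2, hx3⟩
          exact ⟨hx1, hx2, hx3.trans hcv⟩
        · intro hsub
          have : v ∈ {x | x ∈ V' ∧ Reaches tail head u x ∧ Reaches tail head x c} :=
            hsub ⟨hv, huv, Relation.ReflTransGen.refl⟩
          exact hnvc this.2.2
      have hsub2 : {x | x ∈ V' ∧ Reaches tail head c x ∧ Reaches tail head x v} ⊂
          {x | x ∈ V' ∧ Reaches tail head u x ∧ Reaches tail head x v} := by
        constructor
        · rintro x ⟨hx1, hx2, hx3⟩
          exact ⟨hx1, huc.trans hx2, hx3⟩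
        · intro hsub
          have : u ∈ {x | x ∈ V' ∧ Reaches tail head c x ∧ Reaches tail head x v} :=
            hsub ⟨hu, Relation.ReflTransGen.refl, huv⟩
          exact hncu this.2.1
      have h1 := Set.ncard_lt_ncard hsub1 hfin
      have h2 := Set.ncard_lt_ncard hsub2 hfin
      have r1 : ReachesIn tail head V' u c :=
        ih _ (by omega) u hu c hcV huc le_rfl
      have r2 : ReachesIn tail head V' c v :=
        ih _ (by omega) c hcV v hv hcv le_rfl
      exact r1.trans r2

lemma maximalChain_reachesIn' [Fintype V] (tail head : A → V) {V' : Set V}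
    (hV' : IsMaximalChainD tail head V') {u v : V} (hu : u ∈ V') (hv : v ∈ V')
    (huv : Reaches tail head u v) : ReachesIn tail head V' u v :=
  maximalChain_reachesIn tail head hV' _ u hu v hv huv le_rfl

lemma exists_maxD (tail head : A → V) (V' : Set V) (hch : IsChainD tail head V') :
    ∀ s : Finset V, ↑s ⊆ V' → s.Nonempty → ∃ m ∈ s, ∀ c ∈ s, Reaches tail head c m := by
  classical
  intro s
  induction s using Finset.induction_on with
  | empty => intro _ h; simp at h
  | @insert a t ha ih =>
    intro hs _
    have haV : a ∈ V' := hs (by simp)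
    rcases t.eq_empty_or_nonempty with rfl | hte
    · refine ⟨a, by simp, ?_⟩
      intro c hc
      rcases Finset.mem_insert.mp hc with rfl | hc
      · exact Relation.ReflTransGen.refl
      · exact absurd hc (Finset.notMem_empty c)
    · have hts : ↑t ⊆ V' := fun x hx => hs (by simp [hx])
      obtain ⟨m, hm, hmax⟩ := ih hts hte
      have hmV : m ∈ V' := hts hm
      rcases hch a haV m hmV with h | h
      · refine ⟨m, Finset.mem_insert_of_mem hm, ?_⟩
        intro c hc
        rcases Finset.mem_insert.mp hc with rfl | hc
        · exact h
        · exact hmax c hc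
      · refine ⟨a, Finset.mem_insert_self a t, ?_⟩
        intro c hc
        rcases Finset.mem_insert.mp hc with rfl | hc
        · exact Relation.ReflTransGen.refl
        · exact (hmax c hc).trans h

lemma sink_closed {tail head : A → V} {W S : Set V} (hS : IsSinkIn tail head W S)
    {x y : V} (hx : x ∈ S) (h : ReachesIn tail head W x y) : y ∈ S := by
  induction h with
  | refl => exact hx
  | tail _ step ih =>
    obtain ⟨a, ha1, ha2, _, hbW⟩ := step
    exact ha2 ▸ hS.2 a (ha2.symm ▸ hbW) (ha1.symm ▸ ih)

/-- The main one-sided result: unique sink, whose vertices are upper bounds. -/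
lemma sink_main [Fintype V] [Nonempty V] (tail head : A → V) (V' : Set V)
    (hV' : IsMaximalChainD tail head V') :
    (∃! S : Set V, IsSinkIn tail head V' S) ∧
    (∀ S : Set V, IsSinkIn tail head V' S → ∀ s ∈ S, ∀ u ∈ V', Reaches tail head u s) := by
  -- V' is nonempty
  have hne : V'.Nonempty := by
    rcases Set.eq_empty_or_nonempty V' with h | h
    · exfalso
      obtain ⟨v₀⟩ := ‹Nonempty V›
      have hch : IsChainD tail head {v₀} := by
        rintro u hu v hv
        rw [Set.mem_singleton_iff] at hu hv
        subst hu; subst hv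
        exact Or.inl Relation.ReflTransGen.refl
      have := hV'.2 {v₀} hch (h ▸ Set.empty_subset _)
      rw [h] at this
      exact (Set.singleton_nonempty v₀).ne_empty this.symm
    · exact h
  -- a maximum element m of the chain
  have hVfin : V'.Finite := Set.toFinite V'
  obtain ⟨m, hmmem, hmmax⟩ := exists_maxD tail head V' hV'.1 hVfin.toFinset
    (by rw [Set.Finite.coe_toFinset]) (by rwa [Set.Finite.toFinset_nonempty])
  rw [Set.Finite.mem_toFinset] at hmmem
  have hmmax' : ∀ c ∈ V', Reaches tail head c m := fun c hc =>
    hmmax c (hVfin.mem_toFinset.mpr hc)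
  -- the candidate sink
  set S : Set V := {v | v ∈ V' ∧ ReachesIn tail head V' m v} with hSdef
  have hSsink : IsSinkIn tail head V' S := by
    constructor
    · refine ⟨fun x hx => hx.1, ⟨m, hmmem, Relation.ReflTransGen.refl⟩, ?_, ?_⟩
      · rintro u ⟨huV, hmu⟩ v ⟨hvV, hmv⟩
        have huv : Reaches tail head u v :=
          (hmmax' u huV).trans (reachesIn_reaches hmv)
        exact maximalChain_reachesIn' tail head hV' huV hvV huv
      · rintro u ⟨huV, hmu⟩ v hvV huv _
        exact ⟨hvV, hmu.trans huv⟩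
    · rintro a hhead ⟨htV, hmt⟩
      exact ⟨hhead, hmt.tail ⟨a, rfl, rfl, htV, hhead⟩⟩
  -- uniqueness
  have huniq : ∀ S', IsSinkIn tail head V' S' → S' = S := by
    intro S' hS'
    obtain ⟨s', hs'⟩ := hS'.1.2.1
    have hs'V : s' ∈ V' := hS'.1.1 hs'
    have hs'm : ReachesIn tail head V' s' m :=
      maximalChain_reachesIn' tail head hV' hs'V hmmem (hmmax' s' hs'V)
    have hmS' : m ∈ S' := sink_closed hS' hs' hs'm
    ext x
    constructor
    · intro hx
      exact ⟨hS'.1.1 hx, hS'.1.2.2.1 m hmS' x hx⟩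
    · rintro ⟨hxV, hmx⟩
      exact sink_closed hS' hmS' hmx
  refine ⟨⟨S, hSsink, huniq⟩, ?_⟩
  intro S' hS' s hs u hu
  have : s ∈ S := huniq S' hS' ▸ hs
  exact (hmmax' u hu).trans (reachesIn_reaches this.2)

theorem stmt_8 [Fintype V] [Fintype A] [Nonempty V] (tail head : A → V)
    (V' : Set V) (hV' : IsMaximalChainD tail head V') :
    (∃! S : Set V, IsSinkIn tail head V' S) ∧
    (∃! F : Set V, IsSourceIn tail head V' F) ∧
    (∀ S : Set V, IsSinkIn tail head V' S → ∀ s ∈ S, ∀ u ∈ V', Reaches tail head u s) ∧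
    (∀ F : Set V, IsSourceIn tail head V' F → ∀ f ∈ F, ∀ u ∈ V', Reaches tail head f u) := by
  obtain ⟨hsink, hub⟩ := sink_main tail head V' hV'
  obtain ⟨⟨F, hF, hFuniq⟩, hlb⟩ := sink_main head tail V' (isMaximalChainD_swap hV')
  refine ⟨hsink, ⟨F, isSourceIn_swap.mpr hF, fun F' hF' =>
    hFuniq F' (isSourceIn_swap.mp hF')⟩, hub, ?_⟩
  intro F' hF' f hf u hu
  exact reaches_swap (hlb F' (isSourceIn_swap.mp hF') f hf u hu)
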